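/- Let M be an m×m real matrix whose symmetric part M^s = (M+Mᵀ)/2 satisfies uᵀ M^s u ≤ 0 for all u in a subspace T₁ ⊆ ℝ^m. Let Γ = Cᵀ C be an n×n positive semidefinite matrix. Then for every x ∈ ℝ^{mn} such that (I_m ⊗ C)x belongs to the subspace T₁⊗ℝ^n := {u ∈ ℝ^{mn} : each n-block pattern satisfies the defining linear constraints of T₁ componentwise}, one has xᵀ (M^s ⊗ Γ) x ≤ 0. In particular, if T₁ = {u ∈ ℝ^m : ∑_{i∈C_k} d_i u_i = 0 ∀k}, then for x with ∑_{i∈C_k} d_i x^i = 0 for all k one has xᵀ(M^s ⊗ Γ)x ≤ 0. -/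
import Mathlib


open Finset Matrix

lemma kron_sum_swap {m n : ℕ} (A : Matrix (Fin m) (Fin m) ℝ) (y : Fin n → Fin m → ℝ) :
    ∑ i, ∑ j, A i j * ∑ l, y l i * y l j = ∑ l, y l ⬝ᵥ A.mulVec (y l) := by
  simp only [dotProduct, mulVec, Finset.mul_sum]
  refine Eq.trans (Finset.sum_congr rfl fun i _ => Finset.sum_comm) ?_
  refine Eq.trans Finset.sum_comm ?_
  refine Finset.sum_congr rfl fun l _ => ?_
  refine Finset.sum_congr rfl fun i _ => ?_
  refine Finset.sum_congr rfl fun j _ => ?_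
  ring

theorem kronecker_quadratic_form_nonpos
    (m n : ℕ) (M : Matrix (Fin m) (Fin m) ℝ) (T₁ : Submodule ℝ (Fin m → ℝ))
    (hM : ∀ u ∈ T₁, u ⬝ᵥ (((1:ℝ)/2) • (M + Mᵀ)).mulVec u ≤ 0)
    (C : Matrix (Fin n) (Fin n) ℝ)
    (x : Fin m → Fin n → ℝ)
    -- (I_m ⊗ C) x belongs to T₁ ⊗ ℝ^n: each componentwise m-vector of Cx lies in T₁
    (hx : ∀ l : Fin n, (fun i => C.mulVec (x i) l) ∈ T₁) :
    ∑ i, ∑ j, (((1:ℝ)/2) • (M + Mᵀ)) i j * (x i ⬝ᵥ (Cᵀ * C).mulVec (x j)) ≤ 0 := by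
  set Ms := (((1:ℝ)/2) • (M + Mᵀ)) with hMs
  have key : ∀ i j : Fin m, x i ⬝ᵥ (Cᵀ * C).mulVec (x j)
      = ∑ l, C.mulVec (x i) l * C.mulVec (x j) l := by
    intro i j
    rw [← mulVec_mulVec, dotProduct_mulVec, vecMul_transpose]
    simp [dotProduct]
  have hsum : ∑ l, ((fun i => C.mulVec (x i) l) ⬝ᵥ
      Ms.mulVec (fun i => C.mulVec (x i) l)) ≤ 0 :=
    Finset.sum_nonpos fun l _ => hM _ (hx l)
  refine le_trans (le_of_eq ?_) hsum
  simp only [key]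
  exact kron_sum_swap Ms (fun l i => C.mulVec (x i) l)
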